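/- Let G be a graph whose vertex set V_2 is ordered w_1, ..., w_p so that each w_i has at most D - 1 earlier neighbours, let q ≥ 1, and let (L,M) be a cover of G with |L(w_i)| ≥ D·q for all i. Then there exist subsets L'(w_i) ⊆ L(w_i) with |L'(w_i)| = q for all i, such that for every edge w_i w_j of G, no colour of L'(w_i) is matched by M_{w_i w_j} to a colour of L'(w_j). -/

import Mathlib

/-- A cover `(L, M)` of a graph `G`: each vertex `v` gets a set `L v` of colours
(colours of distinct vertices are regarded as distinct, being indexed by the vertex),
and each edge `uv` carries a matching `M u v` between `L u` and `L v`. -/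
structure Cover {V : Type*} (G : SimpleGraph V) where
  L : V → Finset ℕ
  M : V → V → ℕ → ℕ → Prop
  symm : ∀ u v a b, M u v a b → M v u b a
  mem : ∀ u v a b, M u v a b → a ∈ L u ∧ b ∈ L v
  matching_right : ∀ u v a b b', M u v a b → M u v a b' → b = b'
  matching_left : ∀ u v a a' b, M u v a b → M u v a' b → a = a'

/-- An `(L, M)`-colouring: each vertex receives a colour from its list so that along
each edge the two chosen colours are not matched. -/
def Cover.IsColouring {V : Type*} {G : SimpleGraph V} (C : Cover G) (φ : V → ℕ) : Prop :=
  (∀ v, φ v ∈ C.L v) ∧ ∀ u v, G.Adj u v → ¬ C.M u v (φ u) (φ v)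

/-- Let `G` be a graph on vertices `w_0, …, w_{p-1}` such that each `w_i` has at most
`D - 1` earlier neighbours, let `q ≥ 1`, and let `(L, M)` be a cover of `G` with
`|L(w_i)| ≥ D·q` for all `i`. Then there are subsets `L'(w_i) ⊆ L(w_i)` of size `q`
such that for every edge `w_i w_j`, no colour of `L'(w_i)` is matched by the matching
of that edge to a colour of `L'(w_j)`. -/
theorem stmt_12 {p : ℕ} (G : SimpleGraph (Fin p)) (C : Cover G) (D q : ℕ)
    (hD : 1 ≤ D) (hq : 1 ≤ q)
    (hord : ∀ i : Fin p, {j : Fin p | G.Adj i j ∧ j < i}.ncard ≤ D - 1)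
    (hL : ∀ i, D * q ≤ (C.L i).card) :
    ∃ L' : Fin p → Finset ℕ,
      (∀ i, L' i ⊆ C.L i ∧ (L' i).card = q) ∧
      ∀ i j, G.Adj i j → ∀ a ∈ L' i, ∀ b ∈ L' j, ¬ C.M i j a b := by
  classical
  suffices h : ∀ n : ℕ, n ≤ p → ∃ L' : Fin p → Finset ℕ,
      (∀ i : Fin p, (i : ℕ) < n → L' i ⊆ C.L i ∧ (L' i).card = q) ∧
      (∀ i j : Fin p, (i : ℕ) < n → (j : ℕ) < n → G.Adj i j →
        ∀ a ∈ L' i, ∀ b ∈ L' j, ¬ C.M i j a b) by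
    obtain ⟨L', h1, h2⟩ := h p le_rfl
    exact ⟨L', fun i => h1 i i.isLt, fun i j hadj => h2 i j i.isLt j.isLt hadj⟩
  intro n
  induction n with
  | zero => intro _; exact ⟨fun _ => ∅, by simp, by simp⟩
  | succ n ih =>
    intro hn
    obtain ⟨L', h1, h2⟩ := ih (Nat.le_of_succ_le hn)
    set w : Fin p := ⟨n, hn⟩ with hw
    set S : Finset (Fin p) := Finset.univ.filter (fun j => G.Adj w j ∧ j < w) with hS
    set F : Finset ℕ :=
      S.biUnion (fun j => (C.L w).filter (fun a => ∃ b ∈ L' j, C.M w j a b)) with hF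
    have hScard : S.card ≤ D - 1 := by
      have h0 := hord w
      have heq : {j : Fin p | G.Adj w j ∧ j < w} = ↑S := by
        ext j; simp [hS]
      rwa [heq, Set.ncard_coe_finset] at h0
    have hFcard : F.card ≤ (D - 1) * q := by
      calc F.card ≤ ∑ j ∈ S, ((C.L w).filter (fun a => ∃ b ∈ L' j, C.M w j a b)).card :=
            Finset.card_biUnion_le
        _ ≤ ∑ _j ∈ S, q := by
            apply Finset.sum_le_sum
            intro j hj
            have hjw : (j : ℕ) < n := by
              simp only [hS, Finset.mem_filter] at hj
              exact hj.2.2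
            have hq' := (h1 j hjw).2
            have hinj : ((C.L w).filter (fun a => ∃ b ∈ L' j, C.M w j a b)).card
                ≤ (L' j).card := by
              apply Finset.card_le_card_of_injOn
                (fun a => if h : ∃ b ∈ L' j, C.M w j a b then h.choose else 0)
              · intro a ha
                simp only [Finset.coe_filter, Set.mem_setOf_eq] at ha
                simp only [Finset.mem_coe]
                rw [dif_pos ha.2]
                exact ha.2.choose_spec.1
              · intro a ha a' ha' hab
                simp only [Finset.coe_filter, Set.mem_setOf_eq] at ha ha'
                simp only at hab
                rw [dif_pos ha.2, dif_pos ha'.2] at hab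
                exact C.matching_left w j a a' _ ha.2.choose_spec.2
                  (hab ▸ ha'.2.choose_spec.2)
            omega
        _ = S.card * q := by rw [Finset.sum_const, smul_eq_mul]
        _ ≤ (D - 1) * q := Nat.mul_le_mul_right _ hScard
    have hDq : D * q = (D - 1) * q + q := by
      have : (D - 1) + 1 = D := Nat.sub_add_cancel hD
      calc D * q = ((D - 1) + 1) * q := by rw [this]
        _ = (D - 1) * q + q := by ring
    have hcard : q ≤ ((C.L w) \ F).card := by
      have h3 := Finset.card_le_card_sdiff_add_card (s := C.L w) (t := F)
      have h4 := hL w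
      omega
    obtain ⟨T, hTsub, hTcard⟩ := Finset.exists_subset_card_eq hcard
    refine ⟨fun i => if i = w then T else L' i, ?_, ?_⟩
    · intro i hi
      by_cases hiw : i = w
      · subst hiw
        simp only [if_pos]
        exact ⟨hTsub.trans (Finset.sdiff_subset), hTcard⟩
      · have : (i : ℕ) < n := by
          rcases Nat.lt_succ_iff_lt_or_eq.mp hi with h | h
          · exact h
          · exact absurd (Fin.ext h) hiw
        simp only [if_neg hiw]
        exact h1 i this
    · intro i j hi hj hadj a ha b hb hM
      have key : ∀ i' j' : Fin p, (j' : ℕ) < n + 1 → G.Adj w j' → j' ≠ w →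
          ∀ a' ∈ T, ∀ b' ∈ L' j', ¬ C.M w j' a' b' := by
        intro i' j' hj' hadj' hjw' a' ha' b' hb' hM'
        have hjn : (j' : ℕ) < n := by
          rcases Nat.lt_succ_iff_lt_or_eq.mp hj' with h | h
          · exact h
          · exact absurd (Fin.ext h) hjw'
        have haF : a' ∈ F := by
          rw [hF]
          apply Finset.mem_biUnion.mpr
          refine ⟨j', ?_, ?_⟩
          · simp only [hS, Finset.mem_filter]
            exact ⟨Finset.mem_univ _, hadj', by
              rw [Fin.lt_def]; exact hjn⟩
          · exact Finset.mem_filter.mpr ⟨(C.mem w j' a' b' hM').1, ⟨b', hb', hM'⟩⟩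
        have := hTsub ha'
        rw [Finset.mem_sdiff] at this
        exact this.2 haF
      by_cases hiw : i = w <;> by_cases hjw : j = w
      · subst hiw; exact absurd (hjw ▸ hadj) G.irrefl
      · subst hiw
        simp only [if_pos] at ha
        simp only [if_neg hjw] at hb
        exact key w j hj hadj hjw a ha b hb hM
      · subst hjw
        simp only [if_pos] at hb
        simp only [if_neg hiw] at ha
        exact key w i hi hadj.symm hiw b hb a ha (C.symm i w a b hM)
      · simp only [if_neg hiw] at ha
        simp only [if_neg hjw] at hb
        have hin : (i : ℕ) < n := by
          rcases Nat.lt_succ_iff_lt_or_eq.mp hi with h | h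
          · exact h
          · exact absurd (Fin.ext h) hiw
        have hjn : (j : ℕ) < n := by
          rcases Nat.lt_succ_iff_lt_or_eq.mp hj with h | h
          · exact h
          · exact absurd (Fin.ext h) hjw
        exact h2 i j hin hjn hadj a ha b hb hM
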